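/- For every τ ∈ ℂ and every x ∈ ℂ, the Hermite function satisfies the second-order linear differential equation H_τ''(x) − 2x·H_τ'(x) + 2τ·H_τ(x) = 0. -/

import Mathlib

open Complex MeasureTheory Filter Topology

/-- Pochhammer symbol `(a)_m = a (a+1) ⋯ (a+m-1)` for complex `a`. -/
noncomputable def cPoch (a : ℂ) (m : ℕ) : ℂ := ∏ k ∈ Finset.range m, (a + k)

/-- Confluent hypergeometric function `₁F₁(a, b, z) = Σ (a)_m / (b)_m · z^m / m!`. -/
noncomputable def oneF1 (a b z : ℂ) : ℂ :=
  ∑' m : ℕ, (cPoch a m / cPoch b m) * z ^ m / (Nat.factorial m : ℂ)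

/-- The Hermite function `H_τ` of complex degree `τ`. -/
noncomputable def hermiteFn (τ x : ℂ) : ℂ :=
  2 ^ τ * (Complex.Gamma (1 / 2) / Complex.Gamma ((1 - τ) / 2)) *
      oneF1 (-τ / 2) (1 / 2) (x ^ 2) +
    2 ^ τ * x * (Complex.Gamma (-(1 / 2)) / Complex.Gamma (-τ / 2)) *
      oneF1 ((1 - τ) / 2) (3 / 2) (x ^ 2)

/-- Moments of the generalized Hermite linear functional `𝒢_H(τ)`:
`m_{2k}(τ) = (τ+1)_{2k} / (k! 2^{2k})` and `m_{2k+1}(τ) = 0`. -/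
noncomputable def genHermiteMoment (τ : ℂ) (n : ℕ) : ℂ :=
  if n % 2 = 0 then cPoch (τ + 1) n / (((n / 2).factorial : ℂ) * 2 ^ n) else 0

/-! ### Auxiliary development -/

/-- The `m`-th term of the ₁F₁ series. -/
noncomputable def hTerm (a b z : ℂ) (m : ℕ) : ℂ :=
  (cPoch a m / cPoch b m) * z ^ m / (Nat.factorial m : ℂ)

lemma oneF1_eq_tsum_hTerm (a b z : ℂ) : oneF1 a b z = ∑' m, hTerm a b z m := rfl

lemma cPoch_succ (a : ℂ) (m : ℕ) : cPoch a (m + 1) = cPoch a m * (a + m) :=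
  Finset.prod_range_succ _ _

lemma cPoch_ne_zero {b : ℂ} (hb : ∀ k : ℕ, b + k ≠ 0) (m : ℕ) : cPoch b m ≠ 0 :=
  Finset.prod_ne_zero_iff.2 fun k _ => hb k

lemma hTerm_succ (a : ℂ) {b : ℂ} (hb : ∀ k : ℕ, b + k ≠ 0) (z : ℂ) (m : ℕ) :
    hTerm a b z (m + 1) = ((a + m) * z / ((b + m) * ((m : ℂ) + 1))) * hTerm a b z m := by
  have h1 : cPoch b m ≠ 0 := cPoch_ne_zero hb m
  have h2 : (b + m) ≠ 0 := hb m
  have h3 : ((Nat.factorial m : ℂ)) ≠ 0 := Nat.cast_ne_zero.2 m.factorial_ne_zero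
  have h4 : ((m : ℂ) + 1) ≠ 0 := by
    exact_mod_cast (Nat.cast_ne_zero (R := ℂ)).2 (Nat.succ_ne_zero m)
  unfold hTerm
  rw [cPoch_succ, cPoch_succ, Nat.factorial_succ]
  push_cast
  field_simp
  ring

lemma norm_aux {b : ℝ} (hb : 0 < b) (k : ℕ) : (k : ℝ) ≤ ‖(b : ℂ) + k‖ := by
  have h : ((b : ℂ) + k).re = b + k := by simp
  calc (k : ℝ) ≤ b + k := by linarith
    _ = |((b : ℂ) + k).re| := by rw [h]; rw [abs_of_pos (by positivity)]
    _ ≤ ‖(b : ℂ) + k‖ := Complex.abs_re_le_norm _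
    _ = ‖(b : ℂ) + k‖ := rfl

lemma ne_zero_aux {b : ℝ} (hb : 0 < b) (k : ℕ) : (b : ℂ) + k ≠ 0 := by
  intro h
  have h2 := congrArg Complex.re h
  simp at h2
  have : (0:ℝ) ≤ (k:ℝ) := Nat.cast_nonneg k
  nlinarith

lemma summable_norm_hTerm (a z : ℂ) {b : ℝ} (hb : 0 < b) :
    Summable (fun m => ‖hTerm a (b : ℂ) z m‖) := by
  have hb0 : ∀ k : ℕ, (b : ℂ) + k ≠ 0 := ne_zero_aux hb
  apply summable_of_ratio_norm_eventually_le (r := 1/2) (by norm_num)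
  filter_upwards [eventually_ge_atTop (⌈‖a‖⌉₊ + ⌈4 * ‖z‖⌉₊ + 1)] with m hm
  have hma : ‖a‖ ≤ (m : ℝ) := by
    calc ‖a‖ ≤ (⌈‖a‖⌉₊ : ℝ) := Nat.le_ceil _
      _ ≤ (m : ℝ) := by exact_mod_cast Nat.le_of_lt (by omega)
  have hmz : 4 * ‖z‖ ≤ (m : ℝ) + 1 := by
    calc 4 * ‖z‖ ≤ (⌈4 * ‖z‖⌉₊ : ℝ) := Nat.le_ceil _
      _ ≤ (m : ℝ) + 1 := by
        have : (⌈4 * ‖z‖⌉₊ : ℝ) ≤ (m : ℝ) := by exact_mod_cast Nat.le_of_lt (by omega)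
        linarith
  have hm1 : (1 : ℝ) ≤ (m : ℝ) := by exact_mod_cast Nat.one_le_iff_ne_zero.2 (by omega)
  rw [hTerm_succ a hb0 z m]
  rw [Real.norm_of_nonneg (norm_nonneg _), Real.norm_of_nonneg (norm_nonneg _), norm_mul]
  have hratio : ‖(a + m) * z / (((b:ℂ) + m) * ((m : ℂ) + 1))‖ ≤ 1/2 := by
    rw [norm_div, norm_mul, norm_mul]
    have hden : (m : ℝ) * ((m:ℝ) + 1) ≤ ‖(b:ℂ) + m‖ * ‖(m : ℂ) + 1‖ := by
      have h1 := norm_aux hb m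
      have h2 : ‖(m : ℂ) + 1‖ = (m : ℝ) + 1 := by
        have he : ((m : ℂ) + 1) = ((((m : ℝ) + 1) : ℝ) : ℂ) := by push_cast; ring
        rw [he, Complex.norm_real, Real.norm_of_nonneg (by positivity)]
      rw [h2]
      apply mul_le_mul_of_nonneg_right h1 (by linarith)
    have hnum : ‖a + (m : ℂ)‖ * ‖z‖ ≤ 2 * (m : ℝ) * ‖z‖ := by
      have h1 : ‖a + (m : ℂ)‖ ≤ ‖a‖ + (m : ℝ) := by
        calc ‖a + (m : ℂ)‖ ≤ ‖a‖ + ‖(m : ℂ)‖ := norm_add_le _ _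
          _ = ‖a‖ + (m : ℝ) := by rw [Complex.norm_natCast]
      have : ‖a‖ + (m : ℝ) ≤ 2 * (m : ℝ) := by linarith
      have := le_trans h1 this
      exact mul_le_mul_of_nonneg_right this (norm_nonneg z)
    have hdenpos : (0 : ℝ) < ‖(b:ℂ) + m‖ * ‖(m : ℂ) + 1‖ := by nlinarith
    rw [div_le_iff₀ hdenpos]
    calc ‖a + (m:ℂ)‖ * ‖z‖ ≤ 2 * (m:ℝ) * ‖z‖ := hnum
      _ ≤ 1/2 * ((m:ℝ) * ((m:ℝ) + 1)) := by nlinarith [norm_nonneg z]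
      _ ≤ 1/2 * (‖(b:ℂ) + m‖ * ‖(m : ℂ) + 1‖) := by linarith [mul_le_mul_of_nonneg_left hden (by norm_num : (0:ℝ) ≤ 1/2)]
  calc ‖(a + m) * z / (((b:ℂ) + m) * ((m : ℂ) + 1))‖ * ‖hTerm a (b:ℂ) z m‖
      ≤ 1/2 * ‖hTerm a (b:ℂ) z m‖ :=
        mul_le_mul_of_nonneg_right hratio (norm_nonneg _)

lemma summable_hTerm (a z : ℂ) {b : ℝ} (hb : 0 < b) :
    Summable (fun m => hTerm a (b : ℂ) z m) :=
  (summable_norm_hTerm a z hb).of_norm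

/-- Power series coefficients of the Hermite function. -/
noncomputable def hCoeff (τ : ℂ) (n : ℕ) : ℂ :=
  if n % 2 = 0 then
    (2 ^ τ * (Complex.Gamma (1 / 2) / Complex.Gamma ((1 - τ) / 2))) *
      (cPoch (-τ / 2) (n / 2) / cPoch (1 / 2) (n / 2) / ((n / 2).factorial : ℂ))
  else
    (2 ^ τ * (Complex.Gamma (-(1 / 2)) / Complex.Gamma (-τ / 2))) *
      (cPoch ((1 - τ) / 2) (n / 2) / cPoch (3 / 2) (n / 2) / ((n / 2).factorial : ℂ))

lemma hCoeff_even (τ : ℂ) (k : ℕ) :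
    hCoeff τ (2 * k) = (2 ^ τ * (Complex.Gamma (1 / 2) / Complex.Gamma ((1 - τ) / 2))) *
      (cPoch (-τ / 2) k / cPoch (1 / 2) k / (k.factorial : ℂ)) := by
  simp [hCoeff, Nat.mul_mod_right, Nat.mul_div_cancel_left k (by norm_num : 0 < 2)]

lemma hCoeff_odd (τ : ℂ) (k : ℕ) :
    hCoeff τ (2 * k + 1) = (2 ^ τ * (Complex.Gamma (-(1 / 2)) / Complex.Gamma (-τ / 2))) *
      (cPoch ((1 - τ) / 2) k / cPoch (3 / 2) k / (k.factorial : ℂ)) := by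
  have h1 : (2 * k + 1) % 2 = 1 := by omega
  have h2 : (2 * k + 1) / 2 = k := by omega
  simp [hCoeff, h1, h2]

lemma half_cast' : ((1/2 : ℝ) : ℂ) = (1/2 : ℂ) := by norm_num
lemma threehalf_cast' : ((3/2 : ℝ) : ℂ) = (3/2 : ℂ) := by norm_num

lemma half_ne (k : ℕ) : (1/2 : ℂ) + k ≠ 0 := by
  have h := ne_zero_aux (b := 1/2) (by norm_num) k
  rwa [half_cast'] at h

lemma threehalf_ne (k : ℕ) : (3/2 : ℂ) + k ≠ 0 := by
  have h := ne_zero_aux (b := 3/2) (by norm_num) k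
  rwa [threehalf_cast'] at h

lemma raw_succ (a : ℂ) {b : ℂ} (hb : ∀ k : ℕ, b + k ≠ 0) (k : ℕ) :
    cPoch a (k + 1) / cPoch b (k + 1) / ((Nat.factorial (k + 1) : ℂ)) =
      ((a + k) / ((b + k) * ((k : ℂ) + 1))) * (cPoch a k / cPoch b k / (Nat.factorial k : ℂ)) := by
  have h := hTerm_succ a hb 1 k
  simpa [hTerm] using h

lemma hCoeff_rec (τ : ℂ) (n : ℕ) :
    ((n : ℂ) + 2) * ((n : ℂ) + 1) * hCoeff τ (n + 2) = 2 * ((n : ℂ) - τ) * hCoeff τ n := by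
  have h4 : ∀ k : ℕ, ((k : ℂ) + 1) ≠ 0 := fun k => by
    exact_mod_cast (Nat.cast_ne_zero (R := ℂ)).2 (Nat.succ_ne_zero k)
  obtain ⟨k, rfl | rfl⟩ := Nat.even_or_odd' n
  · have h2 : (1/2 : ℂ) + k ≠ 0 := half_ne k
    have hratio : ((2 * (k : ℂ) + 2) * (2 * (k : ℂ) + 1)) *
        ((-τ / 2 + k) / (((1/2 : ℂ) + k) * ((k : ℂ) + 1))) = 2 * (2 * (k : ℂ) - τ) := by
      rw [← mul_div_assoc, div_eq_iff (mul_ne_zero h2 (h4 k))]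
      ring
    rw [show 2 * k + 2 = 2 * (k + 1) from by ring, hCoeff_even, hCoeff_even,
      raw_succ _ half_ne]
    push_cast
    linear_combination (2 ^ τ * (Complex.Gamma (1 / 2) / Complex.Gamma ((1 - τ) / 2)) *
      (cPoch (-τ / 2) k / cPoch (1 / 2) k / (Nat.factorial k : ℂ))) * hratio
  · have h2 : (3/2 : ℂ) + k ≠ 0 := threehalf_ne k
    have hratio : ((2 * (k : ℂ) + 3) * (2 * (k : ℂ) + 2)) *
        (((1 - τ) / 2 + k) / (((3/2 : ℂ) + k) * ((k : ℂ) + 1))) = 2 * (2 * (k : ℂ) + 1 - τ) := by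
      rw [← mul_div_assoc, div_eq_iff (mul_ne_zero h2 (h4 k))]
      ring
    rw [show 2 * k + 1 + 2 = 2 * (k + 1) + 1 from by ring, hCoeff_odd, hCoeff_odd,
      raw_succ _ threehalf_ne]
    push_cast
    linear_combination (2 ^ τ * (Complex.Gamma (-(1 / 2)) / Complex.Gamma (-τ / 2)) *
      (cPoch ((1 - τ) / 2) k / cPoch (3 / 2) k / (Nat.factorial k : ℂ))) * hratio

lemma hCoeff_even_hTerm (τ x : ℂ) (k : ℕ) :
    hCoeff τ (2 * k) * x ^ (2 * k) =
      (2 ^ τ * (Complex.Gamma (1 / 2) / Complex.Gamma ((1 - τ) / 2))) *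
        hTerm (-τ / 2) (1/2) (x ^ 2) k := by
  rw [hCoeff_even, hTerm, pow_mul]
  ring

lemma hCoeff_odd_hTerm (τ x : ℂ) (k : ℕ) :
    hCoeff τ (2 * k + 1) * x ^ (2 * k + 1) =
      (2 ^ τ * (Complex.Gamma (-(1 / 2)) / Complex.Gamma (-τ / 2))) * x *
        hTerm ((1 - τ) / 2) (3/2) (x ^ 2) k := by
  rw [hCoeff_odd, hTerm, pow_succ, pow_mul]
  ring

lemma half_cast : ((1/2 : ℝ) : ℂ) = (1/2 : ℂ) := by norm_num
lemma threehalf_cast : ((3/2 : ℝ) : ℂ) = (3/2 : ℂ) := by norm_num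

lemma summable_hTerm_half (a z : ℂ) : Summable (fun m => hTerm a (1/2 : ℂ) z m) := by
  have := summable_hTerm a z (b := 1/2) (by norm_num)
  rwa [half_cast] at this

lemma summable_hTerm_threehalf (a z : ℂ) : Summable (fun m => hTerm a (3/2 : ℂ) z m) := by
  have := summable_hTerm a z (b := 3/2) (by norm_num)
  rwa [threehalf_cast] at this

lemma summable_norm_hTerm_half (a z : ℂ) : Summable (fun m => ‖hTerm a (1/2 : ℂ) z m‖) := by
  have := summable_norm_hTerm a z (b := 1/2) (by norm_num)
  rwa [half_cast] at this

lemma summable_norm_hTerm_threehalf (a z : ℂ) :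
    Summable (fun m => ‖hTerm a (3/2 : ℂ) z m‖) := by
  have := summable_norm_hTerm a z (b := 3/2) (by norm_num)
  rwa [threehalf_cast] at this

set_option maxHeartbeats 1000000 in
/-- The Hermite function is the sum of the power series with coefficients `hCoeff τ`. -/
lemma hermiteFn_eq (τ : ℂ) :
    hermiteFn τ = FormalMultilinearSeries.ofScalarsSum (hCoeff τ) := by
  funext x
  rw [FormalMultilinearSeries.ofScalars_sum_eq]
  simp_rw [smul_eq_mul]
  have he : Summable (fun k => hCoeff τ (2 * k) * x ^ (2 * k)) := by
    simp_rw [hCoeff_even_hTerm]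
    exact (summable_hTerm_half (-τ/2) (x^2)).mul_left _
  have ho : Summable (fun k => hCoeff τ (2 * k + 1) * x ^ (2 * k + 1)) := by
    simp_rw [hCoeff_odd_hTerm]
    exact (summable_hTerm_threehalf ((1-τ)/2) (x^2)).mul_left _
  rw [← tsum_even_add_odd (f := fun n => hCoeff τ n * x ^ n) he ho]
  rw [hermiteFn]
  congr 1
  · simp_rw [hCoeff_even_hTerm]
    rw [tsum_mul_left, oneF1_eq_tsum_hTerm]
  · simp_rw [hCoeff_odd_hTerm]
    rw [tsum_mul_left, oneF1_eq_tsum_hTerm]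
    ring

set_option maxHeartbeats 1000000 in
lemma hCoeff_radius (τ : ℂ) : (FormalMultilinearSeries.ofScalars ℂ (hCoeff τ)).radius = ⊤ := by
  apply FormalMultilinearSeries.radius_eq_top_of_summable_norm
  intro r
  simp_rw [FormalMultilinearSeries.ofScalars_norm]
  apply Summable.even_add_odd
  · have h := (summable_norm_hTerm_half (-τ/2) (((r:ℝ):ℂ)^2)).mul_left
      ‖2 ^ τ * (Complex.Gamma (1 / 2) / Complex.Gamma ((1 - τ) / 2))‖
    apply h.congr
    intro k
    rw [← norm_mul, ← hCoeff_even_hTerm, norm_mul, norm_pow, Complex.norm_real,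
      NNReal.norm_eq]
  · have h := (summable_norm_hTerm_threehalf ((1-τ)/2) (((r:ℝ):ℂ)^2)).mul_left
      ‖2 ^ τ * (Complex.Gamma (-(1 / 2)) / Complex.Gamma (-τ / 2)) * ((r:ℝ):ℂ)‖
    apply h.congr
    intro k
    rw [← norm_mul, ← hCoeff_odd_hTerm, norm_mul, norm_pow, Complex.norm_real,
      NNReal.norm_eq]

set_option maxHeartbeats 1000000 in
/-- Differentiating a power series with radius of convergence `r`. -/
lemma hasFPowerSeriesOnBall_deriv {f : ℂ → ℂ} {c : ℕ → ℂ} {r : ENNReal}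
    (h : HasFPowerSeriesOnBall f (FormalMultilinearSeries.ofScalars ℂ c) 0 r) :
    HasFPowerSeriesOnBall (deriv f)
      (FormalMultilinearSeries.ofScalars ℂ (fun n => ((n : ℂ) + 1) * c (n + 1))) 0 r := by
  have h2 := (ContinuousLinearMap.apply ℂ ℂ (1 : ℂ)).comp_hasFPowerSeriesOnBall h.fderiv
  have hfun : (⇑(ContinuousLinearMap.apply ℂ ℂ (1 : ℂ))) ∘ (fderiv ℂ f) = deriv f := by
    funext y
    simp [ContinuousLinearMap.apply_apply, fderiv_apply_one_eq_deriv]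
  have hser : (ContinuousLinearMap.apply ℂ ℂ (1 : ℂ)).compFormalMultilinearSeries
      (FormalMultilinearSeries.ofScalars ℂ c).derivSeries
      = FormalMultilinearSeries.ofScalars ℂ (fun n => ((n : ℂ) + 1) * c (n + 1)) := by
    funext n
    rw [← ContinuousMultilinearMap.mkPiRing_apply_one_eq_self
      ((ContinuousLinearMap.apply ℂ ℂ (1 : ℂ)).compFormalMultilinearSeries
        (FormalMultilinearSeries.ofScalars ℂ c).derivSeries n),
      ← ContinuousMultilinearMap.mkPiRing_apply_one_eq_self
      (FormalMultilinearSeries.ofScalars ℂ (fun n => ((n : ℂ) + 1) * c (n + 1)) n)]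
    congr 1
    rw [ContinuousLinearMap.compFormalMultilinearSeries_apply,
      ContinuousLinearMap.compContinuousMultilinearMap_coe, Function.comp_apply,
      ContinuousLinearMap.apply_apply,
      FormalMultilinearSeries.derivSeries_apply_diag]
    simp only [FormalMultilinearSeries.ofScalars_apply_eq, smul_eq_mul, nsmul_eq_mul,
      one_pow, mul_one]
    push_cast
    ring
  rw [hfun, hser] at h2
  exact h2

set_option maxHeartbeats 1000000 in
/-- The ODE for a power series whose coefficients satisfy the Hermite recurrence. -/
lemma ode_of_series {c : ℕ → ℂ} (τ : ℂ)
    (hrad : (FormalMultilinearSeries.ofScalars ℂ c).radius = ⊤)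
    (hrec : ∀ n : ℕ, ((n : ℂ) + 2) * ((n : ℂ) + 1) * c (n + 2) = 2 * ((n : ℂ) - τ) * c n)
    (x : ℂ) :
    deriv (deriv (FormalMultilinearSeries.ofScalarsSum c)) x
      - 2 * x * deriv (FormalMultilinearSeries.ofScalarsSum c) x
      + 2 * τ * FormalMultilinearSeries.ofScalarsSum c x = 0 := by
  set S : ℂ → ℂ := FormalMultilinearSeries.ofScalarsSum c with hS
  have h0 : HasFPowerSeriesOnBall S (FormalMultilinearSeries.ofScalars ℂ c) 0 ⊤ := by
    have := (FormalMultilinearSeries.ofScalars ℂ c).hasFPowerSeriesOnBall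
      (by rw [hrad]; exact ENNReal.zero_lt_top)
    rwa [hrad] at this
  set c1 : ℕ → ℂ := fun n => ((n : ℂ) + 1) * c (n + 1) with hc1
  set c2 : ℕ → ℂ := fun n => ((n : ℂ) + 1) * c1 (n + 1) with hc2
  have h1 : HasFPowerSeriesOnBall (deriv S) (FormalMultilinearSeries.ofScalars ℂ c1) 0 ⊤ :=
    hasFPowerSeriesOnBall_deriv h0
  have h2 : HasFPowerSeriesOnBall (deriv (deriv S))
      (FormalMultilinearSeries.ofScalars ℂ c2) 0 ⊤ :=
    hasFPowerSeriesOnBall_deriv h1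
  have hx : x ∈ Metric.eball (0 : ℂ) ⊤ := by simp
  have hs0 : HasSum (fun n => c n * x ^ n) (S x) := by
    have := h0.hasSum hx
    simp_rw [FormalMultilinearSeries.ofScalars_apply_eq, smul_eq_mul, zero_add] at this
    exact this
  have hs1 : HasSum (fun n => c1 n * x ^ n) (deriv S x) := by
    have := h1.hasSum hx
    simp_rw [FormalMultilinearSeries.ofScalars_apply_eq, smul_eq_mul, zero_add] at this
    exact this
  have hs2 : HasSum (fun n => c2 n * x ^ n) (deriv (deriv S) x) := by
    have := h2.hasSum hx
    simp_rw [FormalMultilinearSeries.ofScalars_apply_eq, smul_eq_mul, zero_add] at this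
    exact this
  -- shifted series for x * S'
  have hshift : HasSum (fun n : ℕ => (n : ℂ) * c n * x ^ n) (x * deriv S x) := by
    have hmul := hs1.mul_left x
    have h' : HasSum (fun n : ℕ => (fun m : ℕ => (m : ℂ) * c m * x ^ m) (n + 1)) (x * deriv S x) := by
      have heq : (fun n : ℕ => (fun m : ℕ => (m : ℂ) * c m * x ^ m) (n + 1))
          = fun n : ℕ => x * (c1 n * x ^ n) := by
        funext n
        simp only [hc1]
        push_cast
        ring
      rw [heq]
      exact hmul
    have h'' := HasSum.zero_add (f := fun m : ℕ => (m : ℂ) * c m * x ^ m) h'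
    simpa using h''
  have hcomb := (hs2.sub (hshift.mul_left 2)).add (hs0.mul_left (2 * τ))
  have hzero : (fun n => c2 n * x ^ n - 2 * ((n : ℂ) * c n * x ^ n) + 2 * τ * (c n * x ^ n))
      = fun _ => (0 : ℂ) := by
    funext n
    have hr := hrec n
    simp only [hc2, hc1]
    push_cast
    linear_combination (x ^ n) * hr
  rw [hzero] at hcomb
  have hfinal := hcomb.unique hasSum_zero
  linear_combination hfinal

theorem hermiteFn_ode (τ x : ℂ) :
    deriv (deriv (hermiteFn τ)) x - 2 * x * deriv (hermiteFn τ) x + 2 * τ * hermiteFn τ x = 0 := by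
  rw [hermiteFn_eq]
  exact ode_of_series τ (hCoeff_radius τ) (hCoeff_rec τ) x
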